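/- Composition of generalized isospectral reductions: let Σ₁ be an n×k complex matrix with orthonormal columns and Σ₂ a k×r complex matrix with orthonormal columns. Then Σ₁Σ₂ has orthonormal columns and R(λ, Σ₁Σ₂, A) = R(λ, Σ₂, R(λ, Σ₁, A)) for all λ where the relevant inverses exist. -/

import Mathlib

open Matrix

/-- Generalized isospectral reduction of `A` with respect to a matrix `Σ'` with
orthonormal columns. -/
noncomputable def genred {n k : Type} [Fintype n] [Fintype k] [DecidableEq n] [DecidableEq k]
    (lam : ℂ) (S : Matrix n k ℂ) (A : Matrix n n ℂ) : Matrix k k ℂ :=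
  lam • (1 : Matrix k k ℂ) - (Sᴴ * (lam • (1 : Matrix n n ℂ) - A)⁻¹ * S)⁻¹

theorem stmt_9 (n k r : ℕ)
    (A : Matrix (Fin n) (Fin n) ℂ)
    (S₁ : Matrix (Fin n) (Fin k) ℂ) (S₂ : Matrix (Fin k) (Fin r) ℂ)
    (h₁ : S₁ᴴ * S₁ = 1) (h₂ : S₂ᴴ * S₂ = 1)
    (lam : ℂ)
    (hA : IsUnit (lam • (1 : Matrix (Fin n) (Fin n) ℂ) - A).det)
    (hc₁ : IsUnit (S₁ᴴ * (lam • (1 : Matrix (Fin n) (Fin n) ℂ) - A)⁻¹ * S₁).det)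
    (hred : IsUnit (lam • (1 : Matrix (Fin k) (Fin k) ℂ) - genred lam S₁ A).det)
    (hc₂ : IsUnit (S₂ᴴ * (lam • (1 : Matrix (Fin k) (Fin k) ℂ) - genred lam S₁ A)⁻¹ * S₂).det)
    (hc₁₂ : IsUnit ((S₁ * S₂)ᴴ * (lam • (1 : Matrix (Fin n) (Fin n) ℂ) - A)⁻¹ * (S₁ * S₂)).det) :
    (S₁ * S₂)ᴴ * (S₁ * S₂) = 1 ∧
      genred lam (S₁ * S₂) A = genred lam S₂ (genred lam S₁ A) := by
  constructor
  · rw [conjTranspose_mul, Matrix.mul_assoc, ← Matrix.mul_assoc S₁ᴴ S₁, h₁, Matrix.one_mul, h₂]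
  · set M := lam • (1 : Matrix (Fin n) (Fin n) ℂ) - A with hM
    have key : lam • (1 : Matrix (Fin k) (Fin k) ℂ) - genred lam S₁ A
        = (S₁ᴴ * M⁻¹ * S₁)⁻¹ := by
      simp [genred, hM]
    have hinv : (lam • (1 : Matrix (Fin k) (Fin k) ℂ) - genred lam S₁ A)⁻¹
        = S₁ᴴ * M⁻¹ * S₁ := by
      rw [key, Matrix.nonsing_inv_nonsing_inv _ hc₁]
    show _ = lam • (1 : Matrix (Fin r) (Fin r) ℂ)
        - (S₂ᴴ * (lam • (1 : Matrix (Fin k) (Fin k) ℂ) - genred lam S₁ A)⁻¹ * S₂)⁻¹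
    rw [hinv]
    simp only [genred, hM, conjTranspose_mul]
    rw [show S₂ᴴ * S₁ᴴ * M⁻¹ * (S₁ * S₂) = S₂ᴴ * (S₁ᴴ * M⁻¹ * S₁) * S₂ by
      simp only [Matrix.mul_assoc]]
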